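/- Let U = {(x,y,p,q) ∈ ℝ⁴ : p ≠ 0 and p q < 1}. Then the smooth function F : U → ℝ defined by F(x,y,p,q) = [ p q (−12 + 3 p q − 8 √(1 − p q)) + 8 (1 + √(1 − p q)) ] / p³ satisfies both the Wuenschmann condition A = F_y + D(K) − (2/3) F_q K ≡ 0 and the Cartan condition G = D(D(F_{qq})) − D(F_{qp}) + F_{qy} ≡ 0 on U, where D = ∂_x + p ∂_y + q ∂_p + F ∂_q and K = (1/6) D(F_q) − (1/9) F_q² − (1/2) F_p. -/

import Mathlib

noncomputable section

/-- Points of the second jet space: coordinates `(x, y, p, q)`. -/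
abbrev V4 : Type := ℝ × ℝ × ℝ × ℝ

/-- Directional (partial) derivative of `f` at `m` in the constant direction `v`. -/
def pd (v : V4) (f : V4 → ℝ) (m : V4) : ℝ := fderiv ℝ f m v

def ex : V4 := (1, 0, 0, 0)
def ey : V4 := (0, 1, 0, 0)
def ep : V4 := (0, 0, 1, 0)
def eq' : V4 := (0, 0, 0, 1)

/-- The total derivative operator `(Dh)(m) = h_x + p h_y + q h_p + F h_q`. -/
def Dtot (F : V4 → ℝ) (h : V4 → ℝ) (m : V4) : ℝ :=
  pd ex h m + m.2.2.1 * pd ey h m + m.2.2.2 * pd ep h m + F m * pd eq' h m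

/-- `K = (1/6) D(F_q) − (1/9) F_q² − (1/2) F_p`. -/
def Kf (F : V4 → ℝ) (m : V4) : ℝ :=
  (1/6) * Dtot F (pd eq' F) m - (1/9) * (pd eq' F m)^2 - (1/2) * pd ep F m

/-- The Wuenschmann expression `A = F_y + D(K) − (2/3) F_q K`. -/
def Wu (F : V4 → ℝ) (m : V4) : ℝ :=
  pd ey F m + Dtot F (Kf F) m - (2/3) * pd eq' F m * Kf F m

/-- The Cartan expression `G = D(D(F_{qq})) − D(F_{qp}) + F_{qy}`. -/
def CartanG (F : V4 → ℝ) (m : V4) : ℝ :=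
  Dtot F (Dtot F (pd eq' (pd eq' F))) m - Dtot F (pd ep (pd eq' F)) m +
    pd ey (pd eq' F) m

namespace DKPaux

open Real Filter

def Pp : V4 →L[ℝ] ℝ :=
  (ContinuousLinearMap.fst ℝ ℝ ℝ).comp
    ((ContinuousLinearMap.snd ℝ ℝ (ℝ × ℝ)).comp (ContinuousLinearMap.snd ℝ ℝ (ℝ × ℝ × ℝ)))
def Pq : V4 →L[ℝ] ℝ :=
  (ContinuousLinearMap.snd ℝ ℝ ℝ).comp
    ((ContinuousLinearMap.snd ℝ ℝ (ℝ × ℝ)).comp (ContinuousLinearMap.snd ℝ ℝ (ℝ × ℝ × ℝ)))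

def cl (a b : ℝ) : V4 →L[ℝ] ℝ := a • Pp + b • Pq

@[simp] lemma Pp_apply (v : V4) : Pp v = v.2.2.1 := rfl
@[simp] lemma Pq_apply (v : V4) : Pq v = v.2.2.2 := rfl
@[simp] lemma cl_apply (a b : ℝ) (v : V4) : cl a b v = a * v.2.2.1 + b * v.2.2.2 := rfl

lemma hasP (m : V4) : HasFDerivAt (fun m : V4 => m.2.2.1) Pp m := Pp.hasFDerivAt
lemma hasQ (m : V4) : HasFDerivAt (fun m : V4 => m.2.2.2) Pq m := Pq.hasFDerivAt

lemma congr_clm {f : V4 → ℝ} {L : V4 →L[ℝ] ℝ} {m : V4} (a b : ℝ)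
    (h : HasFDerivAt f L m) (hL : ∀ v, L v = cl a b v) : HasFDerivAt f (cl a b) m := by
  convert h using 1
  exact (ContinuousLinearMap.ext hL).symm

lemma HasFDerivAt.inv' {f : V4 → ℝ} {L : V4 →L[ℝ] ℝ} {m : V4}
    (h : HasFDerivAt f L m) (h0 : f m ≠ 0) :
    HasFDerivAt (fun x => (f x)⁻¹) ((-(f m ^ 2)⁻¹) • L) m :=
  (hasDerivAt_inv h0).comp_hasFDerivAt m h

lemma HasFDerivAt.pow' {f : V4 → ℝ} {L : V4 →L[ℝ] ℝ} {m : V4}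
    (h : HasFDerivAt f L m) (n : ℕ) :
    HasFDerivAt (fun x => f x ^ n) (((n : ℝ) * f m ^ (n - 1)) • L) m :=
  (hasDerivAt_pow n (f m)).comp_hasFDerivAt m h

def S (m : V4) : ℝ := Real.sqrt (1 - m.2.2.1 * m.2.2.2)

lemma hasS {m : V4} (h1 : 0 < 1 - m.2.2.1 * m.2.2.2) :
    HasFDerivAt S (cl (-m.2.2.2/(2 * S m)) (-m.2.2.1/(2 * S m))) m := by
  have hs : 0 < S m := Real.sqrt_pos.2 h1
  refine congr_clm _ _ (((hasFDerivAt_const (1:ℝ) m).sub ((hasP m).mul (hasQ m))).sqrt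
    (ne_of_gt h1)) fun v => ?_
  have hrw : Real.sqrt (1 - m.2.2.1 * m.2.2.2) = S m := rfl
  simp [hrw]
  field_simp

/-! Closed forms.  `p := m.2.2.1`, `q := m.2.2.2`, `s := S m`. -/

def Ftcf (m : V4) : ℝ := (3 * S m - 1) * (1 + S m) ^ 3 * (m.2.2.1 ^ 3)⁻¹
def Fqcf (m : V4) : ℝ := -(6 * (1 + S m) ^ 2 * (m.2.2.1 ^ 2)⁻¹)
def Fpcf (m : V4) : ℝ := -(3 * (1 + S m) ^ 4 * (m.2.2.1 ^ 4)⁻¹)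
def Fqqcf (m : V4) : ℝ := 6 * (1 + S m) * (S m * m.2.2.1)⁻¹
def Fqpcf (m : V4) : ℝ := 6 * (1 + S m) ^ 3 / (S m * m.2.2.1 ^ 3)
def Ktcf (m : V4) : ℝ := -((1 + S m) ^ 4 * (2 * m.2.2.1 ^ 4)⁻¹)
def Kpcf (m : V4) : ℝ := (1 + S m) ^ 5 / (S m * m.2.2.1 ^ 5)
def Kqcf (m : V4) : ℝ := (1 + S m) ^ 3 / (S m * m.2.2.1 ^ 3)
def Fqqqcf (m : V4) : ℝ := 3 / S m ^ 3
def Fqqpcf (m : V4) : ℝ := (3 - 9 * S m ^ 2 - 6 * S m ^ 3) / (S m ^ 3 * m.2.2.1 ^ 2)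

lemma hasFt {m : V4} (hp : m.2.2.1 ≠ 0) (h1 : 0 < 1 - m.2.2.1 * m.2.2.2) : HasFDerivAt Ftcf (cl (Fpcf m) (Fqcf m)) m := by
  have hs : 0 < S m := Real.sqrt_pos.2 h1
  have hs2 : S m ^ 2 = 1 - m.2.2.1 * m.2.2.2 := Real.sq_sqrt h1.le
  refine congr_clm _ _
    (((((hasS h1).const_mul 3).sub_const 1).mul
        (DKPaux.HasFDerivAt.pow' ((hasS h1).const_add 1) 3)).mul
      (DKPaux.HasFDerivAt.inv' (DKPaux.HasFDerivAt.pow' (hasP m) 3) (pow_ne_zero 3 hp)))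
    fun v => ?_
  simp [Fpcf, Fqcf]
  have hq : m.2.2.2 = (1 - S m ^ 2) / m.2.2.1 := by rw [hs2]; field_simp [hp]; ring
  rw [hq]
  field_simp [hp, hs.ne']
  ring

lemma hasFq {m : V4} (hp : m.2.2.1 ≠ 0) (h1 : 0 < 1 - m.2.2.1 * m.2.2.2) :
    HasFDerivAt Fqcf (cl (Fqpcf m) (Fqqcf m)) m := by
  have hs : 0 < S m := Real.sqrt_pos.2 h1
  have hs2 : S m ^ 2 = 1 - m.2.2.1 * m.2.2.2 := Real.sq_sqrt h1.le
  refine congr_clm _ _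
    ((((DKPaux.HasFDerivAt.pow' ((hasS h1).const_add 1) 2).const_mul 6).mul
      (DKPaux.HasFDerivAt.inv' (DKPaux.HasFDerivAt.pow' (hasP m) 2)
        (pow_ne_zero 2 hp))).neg) fun v => ?_
  simp [Fqpcf, Fqqcf]
  have hq : m.2.2.2 = (1 - S m ^ 2) / m.2.2.1 := by rw [hs2]; field_simp [hp]; ring
  rw [hq]
  field_simp [hp, hs.ne']
  ring

lemma hasFqq {m : V4} (hp : m.2.2.1 ≠ 0) (h1 : 0 < 1 - m.2.2.1 * m.2.2.2) :
    HasFDerivAt Fqqcf (cl (Fqqpcf m) (Fqqqcf m)) m := by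
  have hs : 0 < S m := Real.sqrt_pos.2 h1
  have hs2 : S m ^ 2 = 1 - m.2.2.1 * m.2.2.2 := Real.sq_sqrt h1.le
  refine congr_clm _ _
    ((((hasS h1).const_add 1).const_mul 6).mul
      (DKPaux.HasFDerivAt.inv' ((hasS h1).mul (hasP m))
        (mul_ne_zero hs.ne' hp))) fun v => ?_
  simp [Fqqpcf, Fqqqcf]
  have hq : m.2.2.2 = (1 - S m ^ 2) / m.2.2.1 := by rw [hs2]; field_simp [hp]; ring
  rw [hq]
  field_simp [hp, hs.ne']
  ring

lemma hasKt {m : V4} (hp : m.2.2.1 ≠ 0) (h1 : 0 < 1 - m.2.2.1 * m.2.2.2) :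
    HasFDerivAt Ktcf (cl (Kpcf m) (Kqcf m)) m := by
  have hs : 0 < S m := Real.sqrt_pos.2 h1
  have hs2 : S m ^ 2 = 1 - m.2.2.1 * m.2.2.2 := Real.sq_sqrt h1.le
  refine congr_clm _ _
    (((DKPaux.HasFDerivAt.pow' ((hasS h1).const_add 1) 4).mul
      (DKPaux.HasFDerivAt.inv' ((DKPaux.HasFDerivAt.pow' (hasP m) 4).const_mul 2)
        (mul_ne_zero two_ne_zero (pow_ne_zero 4 hp)))).neg) fun v => ?_
  simp [Kpcf, Kqcf]
  have hq : m.2.2.2 = (1 - S m ^ 2) / m.2.2.1 := by rw [hs2]; field_simp [hp]; ring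
  rw [hq]
  field_simp [hp, hs.ne']
  ring

def Uo : Set V4 := {m | m.2.2.1 ≠ 0 ∧ m.2.2.1 * m.2.2.2 < 1}

lemma isOpen_Uo : IsOpen Uo := by
  have hc1 : Continuous fun m : V4 => m.2.2.1 := by fun_prop
  have hc2 : Continuous fun m : V4 => m.2.2.1 * m.2.2.2 := by fun_prop
  exact (isOpen_compl_singleton.preimage hc1).inter (isOpen_Iio.preimage hc2)

lemma mem_h1 {m : V4} (hm : m ∈ Uo) : 0 < 1 - m.2.2.1 * m.2.2.2 := by
  have h : m.2.2.1 * m.2.2.2 < 1 := hm.2; linarith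

@[simp] lemma cl_ex (a b : ℝ) : cl a b ex = 0 := by simp [ex]
@[simp] lemma cl_ey (a b : ℝ) : cl a b ey = 0 := by simp [ey]
@[simp] lemma cl_ep (a b : ℝ) : cl a b ep = a := by simp [ep]
@[simp] lemma cl_eq (a b : ℝ) : cl a b eq' = b := by simp [eq']

lemma pd_eq {f : V4 → ℝ} {L : V4 →L[ℝ] ℝ} {m : V4} (h : HasFDerivAt f L m) (v : V4) :
    pd v f m = L v := by rw [pd, h.fderiv]

def F0 : V4 → ℝ := fun m =>
  (m.2.2.1 * m.2.2.2 *
      (-12 + 3 * m.2.2.1 * m.2.2.2 - 8 * Real.sqrt (1 - m.2.2.1 * m.2.2.2)) +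
    8 * (1 + Real.sqrt (1 - m.2.2.1 * m.2.2.2))) / m.2.2.1^3

lemma F0_eq : Set.EqOn F0 Ftcf Uo := by
  intro m hm
  have hp := hm.1
  have h1 := mem_h1 hm
  have hs : 0 < S m := Real.sqrt_pos.2 h1
  have hs2 : S m ^ 2 = 1 - m.2.2.1 * m.2.2.2 := Real.sq_sqrt h1.le
  have hq : m.2.2.2 = (1 - S m ^ 2) / m.2.2.1 := by rw [hs2]; field_simp [hp]; ring
  unfold F0 Ftcf
  rw [show Real.sqrt (1 - m.2.2.1 * m.2.2.2) = S m from rfl]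
  rw [hq]
  field_simp [hp, hs.ne']
  ring

lemma hasF0 {m : V4} (hm : m ∈ Uo) : HasFDerivAt F0 (cl (Fpcf m) (Fqcf m)) m :=
  (hasFt hm.1 (mem_h1 hm)).congr_of_eventuallyEq
    (Filter.eventuallyEq_of_mem (isOpen_Uo.mem_nhds hm) F0_eq)

lemma pdqF0_eq : Set.EqOn (pd eq' F0) Fqcf Uo := fun m hm => by
  rw [pd_eq (hasF0 hm)]; simp [eq']

lemma hasPdqF0 {m : V4} (hm : m ∈ Uo) :
    HasFDerivAt (pd eq' F0) (cl (Fqpcf m) (Fqqcf m)) m :=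
  (hasFq hm.1 (mem_h1 hm)).congr_of_eventuallyEq
    (Filter.eventuallyEq_of_mem (isOpen_Uo.mem_nhds hm) pdqF0_eq)

lemma pdqqF0_eq : Set.EqOn (pd eq' (pd eq' F0)) Fqqcf Uo := fun m hm => by
  rw [pd_eq (hasPdqF0 hm)]; simp [eq']

lemma hasPdqqF0 {m : V4} (hm : m ∈ Uo) :
    HasFDerivAt (pd eq' (pd eq' F0)) (cl (Fqqpcf m) (Fqqqcf m)) m :=
  (hasFqq hm.1 (mem_h1 hm)).congr_of_eventuallyEq
    (Filter.eventuallyEq_of_mem (isOpen_Uo.mem_nhds hm) pdqqF0_eq)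


lemma Kf_eq : Set.EqOn (Kf F0) Ktcf Uo := by
  intro m hm
  have hp := hm.1
  have h1 := mem_h1 hm
  have hs : 0 < S m := Real.sqrt_pos.2 h1
  have hs2 : S m ^ 2 = 1 - m.2.2.1 * m.2.2.2 := Real.sq_sqrt h1.le
  have hq : m.2.2.2 = (1 - S m ^ 2) / m.2.2.1 := by rw [hs2]; field_simp [hp]; ring
  simp only [Kf, Dtot, pd_eq (hasPdqF0 hm), pd_eq (hasF0 hm), cl_apply, F0_eq hm,
    pdqF0_eq hm]
  simp only [ex, ey, ep, eq', Ftcf, Fqcf, Fpcf, Fqqcf, Fqpcf, Ktcf]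
  rw [hq]
  field_simp [hp, hs.ne']
  ring

lemma hasKfF0 {m : V4} (hm : m ∈ Uo) :
    HasFDerivAt (Kf F0) (cl (Kpcf m) (Kqcf m)) m :=
  (hasKt hm.1 (mem_h1 hm)).congr_of_eventuallyEq
    (Filter.eventuallyEq_of_mem (isOpen_Uo.mem_nhds hm) Kf_eq)

lemma wu_zero {m : V4} (hm : m ∈ Uo) : Wu F0 m = 0 := by
  have hp := hm.1
  have h1 := mem_h1 hm
  have hs : 0 < S m := Real.sqrt_pos.2 h1
  have hs2 : S m ^ 2 = 1 - m.2.2.1 * m.2.2.2 := Real.sq_sqrt h1.le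
  have hq : m.2.2.2 = (1 - S m ^ 2) / m.2.2.1 := by rw [hs2]; field_simp [hp]; ring
  simp only [Wu, Dtot, pd_eq (hasKfF0 hm), pd_eq (hasF0 hm), cl_apply, F0_eq hm,
    Kf_eq hm, pdqF0_eq hm]
  simp only [ex, ey, ep, eq', Ftcf, Fqcf, Kpcf, Kqcf, Ktcf]
  rw [hq]
  field_simp [hp, hs.ne']
  ring

lemma g1_eq : Set.EqOn (Dtot F0 (pd eq' (pd eq' F0))) Fqpcf Uo := by
  intro m hm
  have hp := hm.1
  have h1 := mem_h1 hm
  have hs : 0 < S m := Real.sqrt_pos.2 h1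
  have hs2 : S m ^ 2 = 1 - m.2.2.1 * m.2.2.2 := Real.sq_sqrt h1.le
  have hq : m.2.2.2 = (1 - S m ^ 2) / m.2.2.1 := by rw [hs2]; field_simp [hp]; ring
  simp only [Dtot, pd_eq (hasPdqqF0 hm), cl_apply, F0_eq hm]
  simp only [ex, ey, ep, eq', Ftcf, Fqqpcf, Fqqqcf, Fqpcf]
  rw [hq]
  field_simp [hp, hs.ne']
  ring

lemma g2_eq : Set.EqOn (pd ep (pd eq' F0)) Fqpcf Uo := fun m hm => by
  rw [pd_eq (hasPdqF0 hm)]; simp [ep]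

lemma cartan_zero {m : V4} (hm : m ∈ Uo) : CartanG F0 m = 0 := by
  have hfd : fderiv ℝ (Dtot F0 (pd eq' (pd eq' F0))) m = fderiv ℝ (pd ep (pd eq' F0)) m := by
    apply Filter.EventuallyEq.fderiv_eq
    have e1 : Dtot F0 (pd eq' (pd eq' F0)) =ᶠ[nhds m] Fqpcf :=
      Filter.eventuallyEq_of_mem (isOpen_Uo.mem_nhds hm) g1_eq
    have e2 : pd ep (pd eq' F0) =ᶠ[nhds m] Fqpcf :=
      Filter.eventuallyEq_of_mem (isOpen_Uo.mem_nhds hm) g2_eq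
    exact e1.trans e2.symm
  have hey : fderiv ℝ (pd eq' F0) m ey = 0 := by
    have h := pd_eq (hasPdqF0 hm) ey
    simp only [pd] at h
    rw [h]; simp [ey]
  simp only [CartanG, Dtot, pd, hfd, hey]
  ring


end DKPaux

/-- Example 3 (from the dKP solution `u = √(2x)`): the function
`F = [ p q (−12 + 3 p q − 8 √(1 − p q)) + 8 (1 + √(1 − p q)) ] / p³`
satisfies both the Wuenschmann condition `A ≡ 0` and the Cartan condition `G ≡ 0`
on `U = {p ≠ 0 and p q < 1}`. -/
theorem dkp_example_einstein_weyl :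
    ∀ m ∈ {m : V4 | m.2.2.1 ≠ 0 ∧ m.2.2.1 * m.2.2.2 < 1},
      Wu (fun m : V4 =>
          (m.2.2.1 * m.2.2.2 *
              (-12 + 3 * m.2.2.1 * m.2.2.2 - 8 * Real.sqrt (1 - m.2.2.1 * m.2.2.2)) +
            8 * (1 + Real.sqrt (1 - m.2.2.1 * m.2.2.2))) / m.2.2.1^3) m = 0 ∧
      CartanG (fun m : V4 =>
          (m.2.2.1 * m.2.2.2 *
              (-12 + 3 * m.2.2.1 * m.2.2.2 - 8 * Real.sqrt (1 - m.2.2.1 * m.2.2.2)) +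
            8 * (1 + Real.sqrt (1 - m.2.2.1 * m.2.2.2))) / m.2.2.1^3) m = 0 := by
  intro m hm
  have hm' : m ∈ DKPaux.Uo := hm
  exact ⟨DKPaux.wu_zero hm', DKPaux.cartan_zero hm'⟩
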